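/- Let (G, H) be a pair of dual locally compact abelian groups and ν a good measure sequence on H (i.e. c_ν(g) := lim_{N→∞} ∫_H ⟨g,h⟩ dν_N(h) exists for all g ∈ G). Then the set Γ_ν := { g ∈ G : |c_ν(g)| = 1 } is a subgroup of G, and the restriction of c_ν to Γ_ν is a group homomorphism Γ_ν → 𝕋. -/

import Mathlib

open MeasureTheory Filter Topology

private lemma integrable_of_bdd {α E : Type*} [MeasurableSpace α] [TopologicalSpace α]
    [OpensMeasurableSpace α] [NormedAddCommGroup E] [SecondCountableTopology E]
    {μ : Measure α} [IsFiniteMeasure μ]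
    {f : α → E} (hf : Continuous f) {C : ℝ} (hC : ∀ x, ‖f x‖ ≤ C) : Integrable f μ :=
  ⟨hf.aestronglyMeasurable, HasFiniteIntegral.of_bounded (ae_of_all _ hC)⟩

private lemma norm_sub_sq_aux (u v : ℂ) :
    ‖u - v‖ ^ 2 = Complex.normSq u + Complex.normSq v - 2 * ((starRingEnd ℂ) v * u).re := by
  rw [Complex.sq_norm]
  simp [Complex.normSq_apply, Complex.mul_re, Complex.sub_re, Complex.sub_im]
  ring

private lemma mul_sub_mul_norm_aux {u v a b : ℂ} (hv : ‖v‖ = 1) (ha : ‖a‖ = 1) :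
    ‖u * v - a * b‖ ≤ ‖u - a‖ + ‖v - b‖ := by
  have h : u * v - a * b = (u - a) * v + a * (v - b) := by ring
  rw [h]
  refine le_trans (norm_add_le _ _) ?_
  rw [norm_mul, norm_mul, hv, ha, mul_one, one_mul]

private lemma pt_aux {t ε : ℝ} (ht : 0 ≤ t) (hε : 0 < ε) : t ≤ ε / 2 + (2 / ε) * t ^ 2 := by
  rw [← sub_nonneg]
  have hid : ε / 2 + (2 / ε) * t ^ 2 - t = (2 * t - ε) ^ 2 / (2 * ε) + t := by
    field_simp; ring
  rw [hid]; positivity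

theorem gamma_nu_subgroup
    {G : Type*} [CommGroup G] [TopologicalSpace G] [IsTopologicalGroup G]
    [LocallyCompactSpace G]
    [MeasurableSpace (PontryaginDual G)] [BorelSpace (PontryaginDual G)]
    (ν : ℕ → Measure (PontryaginDual G)) (hν : ∀ N, IsProbabilityMeasure (ν N))
    (c : G → ℂ)
    (hgood : ∀ g : G, Tendsto (fun N => ∫ h, ((h g : ℂ)) ∂ν N) atTop (𝓝 (c g))) :
    ∃ Γ : Subgroup G, (Γ : Set G) = {g : G | ‖c g‖ = 1} ∧
      ∀ g ∈ Γ, ∀ g' ∈ Γ, c (g * g') = c g * c g' := by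
  haveI := hν
  -- continuity and norm facts
  have hc : ∀ g : G, Continuous fun h : PontryaginDual G => (h g : ℂ) := fun g =>
    continuous_subtype_val.comp
      (show Continuous fun h : ContinuousMonoidHom G Circle => h g from
        continuous_eval_const g)
  have hnorm : ∀ (h : PontryaginDual G) (g : G), ‖(h g : ℂ)‖ = 1 := fun h g => by
    exact Circle.norm_coe _
  have hint : ∀ (g : G) (N : ℕ), Integrable (fun h : PontryaginDual G => (h g : ℂ)) (ν N) :=
    fun g N => integrable_of_bdd (hc g) (C := 1) fun x => le_of_eq (hnorm x g)
  -- c 1 = 1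
  have c1 : c 1 = 1 := by
    have h1 : ∀ N, ∫ h, ((h (1 : G) : ℂ)) ∂ν N = 1 := by
      intro N
      simp only [map_one, Circle.coe_one]
      simp
    have := hgood 1
    simp only [h1] at this
    exact tendsto_nhds_unique this tendsto_const_nhds
  -- c g⁻¹ = conj (c g)
  have cinv : ∀ g : G, c g⁻¹ = (starRingEnd ℂ) (c g) := by
    intro g
    have h1 : ∀ N, ∫ h, ((h g⁻¹ : ℂ)) ∂ν N = (starRingEnd ℂ) (∫ h, ((h g : ℂ)) ∂ν N) := by
      intro N
      rw [← integral_conj]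
      congr 1; ext h
      rw [map_inv, Circle.coe_inv_eq_conj]
    have h2 : Tendsto (fun N => ∫ h, ((h g⁻¹ : ℂ)) ∂ν N) atTop (𝓝 ((starRingEnd ℂ) (c g))) := by
      simp only [h1]
      exact (Complex.continuous_conj.tendsto _).comp (hgood g)
    exact tendsto_nhds_unique (hgood g⁻¹) h2
  -- for g ∈ Γ, the L¹ distance tends to 0
  have hI : ∀ g : G, ‖c g‖ = 1 →
      Tendsto (fun N => ∫ h, ‖(h g : ℂ) - c g‖ ∂ν N) atTop (𝓝 0) := by
    intro g hg
    have hJeq : ∀ N, ∫ h, ‖(h g : ℂ) - c g‖ ^ 2 ∂ν N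
        = 2 - 2 * ((starRingEnd ℂ) (c g) * ∫ h, ((h g : ℂ)) ∂ν N).re := by
      intro N
      have : ∀ h : PontryaginDual G, ‖(h g : ℂ) - c g‖ ^ 2
          = 2 - 2 * ((starRingEnd ℂ) (c g) * (h g : ℂ)).re := by
        intro h
        rw [norm_sub_sq_aux]
        have h1 : Complex.normSq (h g : ℂ) = 1 := Circle.normSq_coe _
        have h2 : Complex.normSq (c g) = 1 := by
          rw [← Complex.sq_norm, hg]; norm_num
        rw [h1, h2]; ring
      simp only [this]
      have hint_re : Integrable
          (fun h : PontryaginDual G => ((starRingEnd ℂ) (c g) * (h g : ℂ)).re) (ν N) := by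
        refine integrable_of_bdd (Complex.continuous_re.comp (continuous_const.mul (hc g)))
          (C := ‖c g‖) fun x => ?_
        calc ‖((starRingEnd ℂ) (c g) * (x g : ℂ)).re‖
            ≤ ‖(starRingEnd ℂ) (c g) * (x g : ℂ)‖ := Complex.abs_re_le_norm _
          _ = ‖c g‖ := by rw [norm_mul, RCLike.norm_conj, hnorm, mul_one]
      have hre : ∫ h, ((starRingEnd ℂ) (c g) * (h g : ℂ)).re ∂ν N
          = ((starRingEnd ℂ) (c g) * ∫ h, ((h g : ℂ)) ∂ν N).re := by
        have h0 := integral_re (𝕜 := ℂ) (μ := ν N) ((hint g N).const_mul ((starRingEnd ℂ) (c g)))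
        simp only [RCLike.re_to_complex] at h0
        rw [h0, integral_const_mul]
      rw [integral_sub (integrable_const _) (hint_re.const_mul 2), integral_const]
      have := hν N
      rw [probReal_univ]
      simp only [ENNReal.toReal_one, one_smul]
      rw [integral_const_mul (2:ℝ), hre]
    have hJ : Tendsto (fun N => ∫ h, ‖(h g : ℂ) - c g‖ ^ 2 ∂ν N) atTop (𝓝 0) := by
      simp only [hJeq]
      have hlim : Tendsto (fun N => 2 - 2 * ((starRingEnd ℂ) (c g)
          * ∫ h, ((h g : ℂ)) ∂ν N).re) atTop
          (𝓝 (2 - 2 * ((starRingEnd ℂ) (c g) * c g).re)) := by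
        apply Tendsto.const_sub
        apply Tendsto.const_mul
        exact (Complex.continuous_re.tendsto _).comp ((hgood g).const_mul _)
      have : (2 : ℝ) - 2 * ((starRingEnd ℂ) (c g) * c g).re = 0 := by
        have h2 : ((starRingEnd ℂ) (c g) * c g).re = 1 := by
          rw [← Complex.normSq_eq_conj_mul_self, Complex.ofReal_re, Complex.normSq_eq_norm_sq,
            hg]; norm_num
        rw [h2]; ring
      rwa [this] at hlim
    rw [NormedAddCommGroup.tendsto_nhds_zero]
    intro ε hε
    have hJev : ∀ᶠ N in atTop, ∫ h, ‖(h g : ℂ) - c g‖ ^ 2 ∂ν N < ε ^ 2 / 8 := by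
      have := hJ.eventually (eventually_lt_nhds (by positivity : (0:ℝ) < ε ^ 2 / 8))
      exact this
    filter_upwards [hJev] with N hN
    have hbound : ∫ h, ‖(h g : ℂ) - c g‖ ∂ν N
        ≤ ε / 2 + (2 / ε) * ∫ h, ‖(h g : ℂ) - c g‖ ^ 2 ∂ν N := by
      have hi1 : Integrable (fun h : PontryaginDual G => ‖(h g : ℂ) - c g‖) (ν N) :=
        ((hint g N).sub (integrable_const _)).norm
      have hi2 : Integrable (fun h : PontryaginDual G => ‖(h g : ℂ) - c g‖ ^ 2) (ν N) := by
        refine integrable_of_bdd ((((hc g).sub continuous_const).norm).pow 2) (C := 4) fun x => ?_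
        have ht : ‖(x g : ℂ) - c g‖ ≤ 2 := by
          calc ‖(x g : ℂ) - c g‖ ≤ ‖(x g : ℂ)‖ + ‖c g‖ := norm_sub_le _ _
            _ = 2 := by rw [hnorm, hg]; norm_num
        rw [Real.norm_of_nonneg (by positivity)]
        nlinarith [norm_nonneg ((x g : ℂ) - c g)]
      calc ∫ h, ‖(h g : ℂ) - c g‖ ∂ν N
          ≤ ∫ h, (ε / 2 + (2 / ε) * ‖(h g : ℂ) - c g‖ ^ 2) ∂ν N := by
            apply integral_mono hi1 ((integrable_const _).add (hi2.const_mul _))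
            intro h
            exact pt_aux (norm_nonneg _) hε
        _ = ε / 2 + (2 / ε) * ∫ h, ‖(h g : ℂ) - c g‖ ^ 2 ∂ν N := by
            rw [integral_add (integrable_const _) (hi2.const_mul _), integral_const]
            have := hν N
            rw [probReal_univ, integral_const_mul]
            simp
    have hnn : (0:ℝ) ≤ ∫ h, ‖(h g : ℂ) - c g‖ ∂ν N :=
      integral_nonneg fun h => norm_nonneg _
    rw [Real.norm_of_nonneg hnn]
    have : (2 / ε) * ∫ h, ‖(h g : ℂ) - c g‖ ^ 2 ∂ν N ≤ (2 / ε) * (ε ^ 2 / 8) := by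
      apply mul_le_mul_of_nonneg_left hN.le (by positivity)
    have h8 : (2 / ε) * (ε ^ 2 / 8) = ε / 4 := by field_simp; ring
    calc ∫ h, ‖(h g : ℂ) - c g‖ ∂ν N ≤ ε / 2 + (2 / ε) * ∫ h, ‖(h g : ℂ) - c g‖ ^ 2 ∂ν N := hbound
      _ ≤ ε / 2 + ε / 4 := by rw [← h8]; linarith
      _ < ε := by linarith
  -- multiplicativity
  have hmul : ∀ g g' : G, ‖c g‖ = 1 → ‖c g'‖ = 1 → c (g * g') = c g * c g' := by
    intro g g' hg hg'
    have key : Tendsto (fun N => ∫ h, ((h (g * g') : ℂ)) ∂ν N) atTop (𝓝 (c g * c g')) := by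
      rw [tendsto_iff_norm_sub_tendsto_zero]
      apply squeeze_zero (fun N => norm_nonneg _)
        (g := fun N => (∫ h, ‖(h g : ℂ) - c g‖ ∂ν N) + ∫ h, ‖(h g' : ℂ) - c g'‖ ∂ν N)
      · intro N
        have he : (fun h : PontryaginDual G => ((h (g * g') : ℂ)))
            = fun h => (h g : ℂ) * (h g' : ℂ) := by
          ext h; rw [map_mul, Circle.coe_mul]
        have heq : ∫ h, ((h (g * g') : ℂ)) ∂ν N - c g * c g'
            = ∫ h, ((h g : ℂ) * (h g' : ℂ) - c g * c g') ∂ν N := by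
          rw [integral_sub (he ▸ hint (g * g') N) (integrable_const _), integral_const,
            probReal_univ, he]
          simp
        rw [heq]
        refine le_trans (norm_integral_le_integral_norm _) ?_
        have hi1 : Integrable (fun h : PontryaginDual G => ‖(h g : ℂ) - c g‖) (ν N) :=
          ((hint g N).sub (integrable_const _)).norm
        have hi0 : Integrable
            (fun h : PontryaginDual G => ‖(h g : ℂ) * (h g' : ℂ) - c g * c g'‖) (ν N) :=
          (((he ▸ hint (g * g') N : Integrable _ (ν N))).sub (integrable_const _)).norm
        have hi2 : Integrable (fun h : PontryaginDual G => ‖(h g' : ℂ) - c g'‖) (ν N) :=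
          ((hint g' N).sub (integrable_const _)).norm
        calc ∫ h, ‖(h g : ℂ) * (h g' : ℂ) - c g * c g'‖ ∂ν N
            ≤ ∫ h, (‖(h g : ℂ) - c g‖ + ‖(h g' : ℂ) - c g'‖) ∂ν N :=
              integral_mono hi0 (hi1.add hi2) fun h => mul_sub_mul_norm_aux (hnorm h g') hg
          _ = _ := integral_add hi1 hi2
      · rw [← add_zero (0:ℝ)]
        exact (hI g hg).add (hI g' hg')
    exact tendsto_nhds_unique (hgood (g * g')) key
  refine ⟨{ carrier := {g : G | ‖c g‖ = 1}
            one_mem' := by simp [c1]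
            mul_mem' := ?_
            inv_mem' := ?_ }, rfl, ?_⟩
  · intro a b ha hb
    simp only [Set.mem_setOf_eq] at *
    rw [hmul a b ha hb, norm_mul, ha, hb, mul_one]
  · intro a ha
    simp only [Set.mem_setOf_eq] at *
    rw [cinv, RCLike.norm_conj, ha]
  · intro g hg g' hg'
    exact hmul g g' hg hg'
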